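/- Let b₁, b₂, … be real numbers and a₁, a₂, … be positive real numbers, and define monic polynomials P₋₁ = 0, P₀ = 1, P_{n+1}(z) = (z − b_{n+1})·P_n(z) − a_n·P_{n−1}(z) for n ≥ 0 (with a₀·P₋₁ understood as 0). Suppose there exists x₀ ∈ ℝ such that: (i) for every m ≥ 1 and all real roots z₀, z₁ of P_{2m} one has P_{2m−1}(z₀)·P_{2m}'(z₁) = P_{2m−1}(z₁)·P_{2m}'(z₀) (equal masses of the reversed measure at all support points); and (ii) for every m ≥ 0 one has P_{2m+1}(x₀) = 0, for all real roots z₀, z₁ of P_{2m+1} different from x₀ one has P_{2m}(z₀)·P_{2m+1}'(z₁) = P_{2m}(z₁)·P_{2m+1}'(z₀), and P_{2m}(x₀)·P_{2m+1}'(x₀) > 0. Then there exist γ > −1 and c > 0 such that b_n = x₀ for all n ≥ 1, a_n = n/(2c²) for all even n ≥ 1, and a_n = (n+γ)/(2c²) for all odd n ≥ 1; that is, the polynomials are (up to the linear transformation x ↦ c(x − x₀)) the monic generalized Hermite polynomials orthogonal with respect to |x|^γ·exp(−x²)dx. -/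

import Mathlib

open Polynomial

/-- The monic orthogonal polynomials `P n` associated with the three-term recurrence
`P_{n+1}(z) = (z - b_{n+1}) P_n(z) - a_n P_{n-1}(z)`, `P 0 = 1`
(with the term `a₀ · P₋₁` understood as `0`, so `P 1 = X - b 1`). -/
noncomputable def tridiagRec (b a : ℕ → ℝ) : ℕ → Polynomial ℝ
  | 0 => 1
  | 1 => Polynomial.X - Polynomial.C (b 1)
  | n + 2 =>
      (Polynomial.X - Polynomial.C (b (n + 2))) * tridiagRec b a (n + 1)
        - Polynomial.C (a (n + 1)) * tridiagRec b a n

namespace GHC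
open Finset
variable (b a : ℕ → ℝ)

variable (b a : ℕ → ℝ)

lemma rec_eq (k : ℕ) : tridiagRec b a (k+2)
    = (X - C (b (k+2))) * tridiagRec b a (k+1) - C (a (k+1)) * tridiagRec b a k := rfl

lemma monic_natDegree (n : ℕ) :
    (tridiagRec b a n).Monic ∧ (tridiagRec b a n).natDegree = n := by
  induction n using Nat.strong_induction_on with
  | _ n ih =>
    match n with
    | 0 => exact ⟨monic_one, by simp [tridiagRec]⟩
    | 1 => exact ⟨monic_X_sub_C _, natDegree_X_sub_C _⟩
    | (k+2) =>
      obtain ⟨h1m, h1d⟩ := ih (k+1) (by omega)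
      obtain ⟨h0m, h0d⟩ := ih k (by omega)
      have hm : ((X - C (b (k+2))) * tridiagRec b a (k+1)).Monic :=
        (monic_X_sub_C _).mul h1m
      have hdeg : ((X - C (b (k+2))) * tridiagRec b a (k+1)).natDegree = k+2 := by
        rw [natDegree_mul (X_sub_C_ne_zero _) h1m.ne_zero, natDegree_X_sub_C, h1d]; omega
      have hlt : (C (a (k+1)) * tridiagRec b a k).degree
          < ((X - C (b (k+2))) * tridiagRec b a (k+1)).degree := by
        calc (C (a (k+1)) * tridiagRec b a k).degree
            ≤ degree (C (a (k+1))) + (tridiagRec b a k).degree := degree_mul_le _ _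
          _ ≤ 0 + (k : WithBot ℕ) :=
              add_le_add degree_C_le (degree_le_natDegree.trans_eq (by rw [h0d]))
          _ = (k : WithBot ℕ) := zero_add _
          _ < ((k+2 : ℕ) : WithBot ℕ) := by exact_mod_cast by omega
          _ = _ := by rw [degree_eq_natDegree hm.ne_zero, hdeg]
      have h2 : ((X - C (b (k+2))) * tridiagRec b a (k+1)
            + -(C (a (k+1)) * tridiagRec b a k)).degree
          = ((X - C (b (k+2))) * tridiagRec b a (k+1)).degree :=
        degree_add_eq_left_of_degree_lt (by rwa [degree_neg])
      constructor
      · rw [rec_eq, sub_eq_add_neg]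
        exact hm.add_of_left (by rwa [degree_neg])
      · rw [rec_eq, sub_eq_add_neg, natDegree_eq_of_degree_eq h2, hdeg]

lemma monic (n : ℕ) : (tridiagRec b a n).Monic := (monic_natDegree b a n).1
lemma natDeg (n : ℕ) : (tridiagRec b a n).natDegree = n := (monic_natDegree b a n).2
lemma ne_zero (n : ℕ) : tridiagRec b a n ≠ 0 := (monic b a n).ne_zero

lemma coeff_top (n : ℕ) : (tridiagRec b a n).coeff n = 1 := by
  have := (monic b a n).coeff_natDegree
  rwa [natDeg] at this

lemma coeff_gt {n k : ℕ} (h : n < k) : (tridiagRec b a n).coeff k = 0 :=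
  coeff_eq_zero_of_natDegree_lt (by rw [natDeg]; exact h)

/-- subleading coefficient -/
lemma coeff_sub_one (n : ℕ) :
    (tridiagRec b a (n+1)).coeff n = -∑ k ∈ range (n+1), b (k+1) := by
  induction n with
  | zero => simp [tridiagRec]
  | succ k ih =>
    rw [rec_eq, coeff_sub, sub_mul, coeff_sub, coeff_X_mul, coeff_C_mul, coeff_C_mul,
      coeff_top, coeff_gt b a (show k < k+1 by omega), ih,
      Finset.sum_range_succ (fun x => b (x+1)) (k+1)]
    ring

lemma no_common_root (n : ℕ) (z : ℝ) (h1 : (tridiagRec b a (n+1)).eval z = 0)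
    (h0 : (tridiagRec b a n).eval z = 0) (ha : ∀ k ≥ 1, 0 < a k) : False := by
  induction n with
  | zero => simp [tridiagRec] at h0
  | succ k ih =>
    apply ih h0
    rw [rec_eq] at h1
    simp only [eval_sub, eval_mul, eval_C, h0] at h1
    have hak : a (k+1) ≠ 0 := ne_of_gt (ha (k+1) (by omega))
    rcases mul_eq_zero.mp (by linarith : a (k+1) * eval z (tridiagRec b a k) = 0) with h | h
    · exact absurd h hak
    · exact h
lemma eval_prod_eq (r : ℕ → ℝ) (N : ℕ) (x : ℝ) :
    eval x (∏ i ∈ range N, (X - C (r i))) = ∏ i ∈ range N, (x - r i) := by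
  simp [eval_prod]

lemma eval_prod_root (r : ℕ → ℝ) (N i : ℕ) (hi : i < N) :
    eval (r i) (∏ i ∈ range N, (X - C (r i))) = 0 := by
  rw [eval_prod_eq]
  exact Finset.prod_eq_zero (Finset.mem_range.mpr hi) (sub_self _)

lemma prod_sign {n k : ℕ} (hk : k ≤ n) (s : ℕ → ℝ) (x : ℝ)
    (h : ∀ j < n, (j < k → s j < x) ∧ (k ≤ j → x < s j)) :
    0 < (-1:ℝ)^(n-k) * ∏ j ∈ range n, (x - s j) := by
  have hsplit : (∏ j ∈ range k, (x - s j)) * ∏ j ∈ Ico k n, (x - s j)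
      = ∏ j ∈ range n, (x - s j) := Finset.prod_range_mul_prod_Ico _ hk
  have hico : ∏ j ∈ Ico k n, (x - s j)
      = (-1:ℝ)^(n-k) * ∏ j ∈ Ico k n, (s j - x) := by
    calc ∏ j ∈ Ico k n, (x - s j) = ∏ j ∈ Ico k n, ((-1) * (s j - x)) := by
          exact Finset.prod_congr rfl (fun j hj => by ring)
      _ = (∏ _j ∈ Ico k n, (-1:ℝ)) * ∏ j ∈ Ico k n, (s j - x) := Finset.prod_mul_distrib
      _ = (-1:ℝ)^(n-k) * ∏ j ∈ Ico k n, (s j - x) := by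
          rw [Finset.prod_const, Nat.card_Ico]
  have h1 : 0 < ∏ j ∈ range k, (x - s j) :=
    Finset.prod_pos fun j hj => by
      have hj' := Finset.mem_range.mp hj
      have := (h j (by omega)).1 hj'
      linarith
  have h2 : 0 < ∏ j ∈ Ico k n, (s j - x) :=
    Finset.prod_pos fun j hj => by
      have hj' := Finset.mem_Ico.mp hj
      have := (h j hj'.2).2 hj'.1
      linarith
  have hsq : ((-1:ℝ)^(n-k)) * ((-1:ℝ)^(n-k)) = 1 := by
    rw [← pow_add]
    exact Even.neg_one_pow ⟨n-k, rfl⟩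
  calc (0:ℝ) < (((-1:ℝ)^(n-k)) * ((-1:ℝ)^(n-k))) * ((∏ j ∈ range k, (x - s j)) *
        ∏ j ∈ Ico k n, (s j - x)) := by
        rw [hsq, one_mul]; exact mul_pos h1 h2
    _ = (-1:ℝ)^(n-k) * ((∏ j ∈ range k, (x - s j)) * ∏ j ∈ Ico k n, (x - s j)) := by
        rw [hico]; ring
    _ = _ := by rw [hsplit]

lemma exists_root_between (p : Polynomial ℝ) (u v : ℝ) (huv : u < v) (e : ℕ)
    (hu : 0 < (-1:ℝ)^(e+1) * p.eval u) (hv : 0 < (-1:ℝ)^e * p.eval v) :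
    ∃ x, u < x ∧ x < v ∧ p.eval x = 0 := by
  rcases Nat.even_or_odd e with he | he
  · have h1 : p.eval u < 0 := by
      have := he.neg_one_pow (α := ℝ); rw [pow_succ, this, one_mul] at hu; linarith
    have h2 : 0 < p.eval v := by
      have := he.neg_one_pow (α := ℝ); rw [this, one_mul] at hv; linarith
    obtain ⟨x, hx, hfx⟩ := intermediate_value_Ioo huv.le
      (Polynomial.continuous p).continuousOn (Set.mem_Ioo.mpr ⟨h1, h2⟩)
    exact ⟨x, hx.1, hx.2, hfx⟩
  · have hp1 : ((-1:ℝ))^e = -1 := he.neg_one_pow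
    have h1 : 0 < p.eval u := by rw [pow_succ, hp1, neg_one_mul, neg_neg, one_mul] at hu; linarith
    have h2 : p.eval v < 0 := by rw [hp1] at hv; linarith
    obtain ⟨x, hx, hfx⟩ := intermediate_value_Ioo' huv.le
      (Polynomial.continuous p).continuousOn (Set.mem_Ioo.mpr ⟨h2, h1⟩)
    exact ⟨x, hx.1, hx.2, hfx⟩

lemma mono_of_adjacent (t : ℕ → ℝ) (N : ℕ) (h : ∀ j, j + 1 ≤ N → t j < t (j+1)) :
    ∀ i j, i < j → j ≤ N → t i < t j := by
  intro i j hij hjN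
  induction j with
  | zero => omega
  | succ k ih =>
    rcases Nat.lt_or_ge i k with hik | hik
    · exact (ih hik (by omega)).trans (h k hjN)
    · have : i = k := by omega
      subst this; exact h i hjN
lemma interlacing (ha : ∀ k ≥ 1, 0 < a k) (n : ℕ) :
    ∃ r s : ℕ → ℝ,
      (∀ i j, i < j → j < n+1 → r i < r j) ∧
      tridiagRec b a (n+1) = ∏ i ∈ range (n+1), (X - C (r i)) ∧
      tridiagRec b a n = ∏ i ∈ range n, (X - C (s i)) ∧
      (∀ j, j + 1 < n + 1 → r j < s j ∧ s j < r (j+1)) := by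
  induction n with
  | zero =>
    refine ⟨fun _ => b 1, fun _ => 0, ?_, ?_, ?_, ?_⟩
    · intro i j hij hj; omega
    · show X - C (b 1) = _
      rw [Finset.prod_range_one]
    · simp [tridiagRec]
    · intro j hj; omega
  | succ n IH =>
    obtain ⟨r, s, hrmono, hr, hs, hint⟩ := IH
    set p := tridiagRec b a (n+2) with hpdef
    have hre : ∀ i, i ≤ n → eval (r i) (tridiagRec b a (n+1)) = 0 := fun i hi => by
      rw [hr]; exact eval_prod_root r (n+1) i (by omega)
    have hsign : ∀ i, i ≤ n → 0 < (-1:ℝ)^(n+1-i) * eval (r i) p := by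
      intro i hi
      have h0 : 0 < (-1:ℝ)^(n-i) * eval (r i) (tridiagRec b a n) := by
        rw [hs, eval_prod_eq]
        apply prod_sign (by omega) s (r i)
        intro j hj
        constructor
        · intro hji
          have h1 := (hint j (by omega)).2
          rcases Nat.lt_or_ge (j+1) i with h | h
          · exact h1.trans (hrmono (j+1) i h (by omega))
          · have hji' : j + 1 = i := by omega
            rwa [hji'] at h1
        · intro hij
          have h1 := (hint j (by omega)).1
          rcases Nat.lt_or_ge i j with h | h
          · exact (hrmono i j h (by omega)).trans h1
          · have hij' : i = j := by omega
            rwa [hij']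
      have hev : eval (r i) p = -(a (n+1)) * eval (r i) (tridiagRec b a n) := by
        rw [hpdef, rec_eq, eval_sub, eval_mul, eval_mul, hre i hi, eval_C]
        ring
      rw [hev]
      have han : 0 < a (n+1) := ha (n+1) (by omega)
      have hpow : (-1:ℝ)^(n+1-i) = (-1) * (-1:ℝ)^(n-i) := by
        rw [show n+1-i = (n-i)+1 by omega, pow_succ]; ring
      rw [hpow]
      nlinarith [h0]
    have hdegp : (0:WithBot ℕ) < p.degree := by
      rw [degree_eq_natDegree (ne_zero b a (n+2)), natDeg]
      exact_mod_cast (by omega : 0 < n+2)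
    obtain ⟨M, hMr, hMp⟩ : ∃ M, r n < M ∧ 0 < eval M p := by
      have htt := Polynomial.tendsto_atTop_of_leadingCoeff_nonneg p hdegp
        (by rw [(monic b a (n+2)).leadingCoeff]; norm_num)
      obtain ⟨M, h1, h2⟩ := ((htt.eventually_gt_atTop 0).and
        (Filter.eventually_gt_atTop (r n))).exists
      exact ⟨M, h2, h1⟩
    obtain ⟨L, hLr, hLp⟩ : ∃ L, L < r 0 ∧ 0 < (-1:ℝ)^(n+2) * eval L p := by
      have h1 : (p.comp (-X)).natDegree = n+2 := by
        rw [natDegree_comp]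
        simp [natDeg b a (n+2)]
        exact natDeg b a (n+2)
      have h2 : (p.comp (-X)).leadingCoeff = (-1:ℝ)^(n+2) := by
        rw [leadingCoeff_comp (by simp)]
        simp [(monic b a (n+2)).leadingCoeff, natDeg b a (n+2)]
        rw [show p.leadingCoeff = 1 from (monic b a (n+2)).leadingCoeff,
          show p.natDegree = n+2 from natDeg b a (n+2), one_mul]
      have hc0 : p.comp (-X) ≠ 0 :=
        leadingCoeff_ne_zero.mp (by rw [h2]; exact pow_ne_zero _ (by norm_num))
      have hdq : (0:WithBot ℕ) < (C ((-1:ℝ)^(n+2)) * p.comp (-X)).degree := by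
        rw [degree_mul, degree_C (pow_ne_zero _ (by norm_num : (-1:ℝ) ≠ 0)),
          zero_add, degree_eq_natDegree hc0, h1]
        exact_mod_cast (by omega : 0 < n+2)
      have hlc : 0 ≤ (C ((-1:ℝ)^(n+2)) * p.comp (-X)).leadingCoeff := by
        rw [leadingCoeff_mul, leadingCoeff_C, h2]
        exact mul_self_nonneg _
      have htt := Polynomial.tendsto_atTop_of_leadingCoeff_nonneg _ hdq hlc
      obtain ⟨y, h1y, h2y⟩ := ((htt.eventually_gt_atTop 0).and
        (Filter.eventually_gt_atTop (-(r 0)))).exists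
      refine ⟨-y, by linarith, ?_⟩
      have heq : eval y (C ((-1:ℝ)^(n+2)) * p.comp (-X)) = (-1:ℝ)^(n+2) * eval (-y) p := by
        simp [eval_comp]
      rw [← heq]; exact h1y
    have hkey : ∀ j, ∃ x, j ≤ n+1 →
        ((1 ≤ j → r (j-1) < x) ∧ (j ≤ n → x < r j) ∧ eval x p = 0) := by
      intro j
      by_cases hj : j ≤ n+1
      · rcases Nat.eq_zero_or_pos j with rfl | hj1
        · obtain ⟨x, hx1, hx2, hx3⟩ := exists_root_between p L (r 0) hLr (n+1)
            hLp (by simpa using hsign 0 (by omega))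
          exact ⟨x, fun _ => ⟨fun h => absurd h (by omega), fun _ => hx2, hx3⟩⟩
        · rcases Nat.eq_or_lt_of_le hj with rfl | hjn
          · obtain ⟨x, hx1, hx2, hx3⟩ := exists_root_between p (r n) M hMr 0
              (by have := hsign n (le_refl n)
                  rwa [show n+1-n = 1 by omega] at this)
              (by simpa using hMp)
            refine ⟨x, fun _ => ⟨fun _ => ?_, fun h => absurd h (by omega), hx3⟩⟩
            rwa [show n+1-1 = n by omega]
          · have hu : 0 < (-1:ℝ)^((n+1-j)+1) * eval (r (j-1)) p := by
              have := hsign (j-1) (by omega)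
              rwa [show n+1-(j-1) = (n+1-j)+1 by omega] at this
            obtain ⟨x, hx1, hx2, hx3⟩ := exists_root_between p (r (j-1)) (r j)
              (hrmono (j-1) j (by omega) (by omega)) (n+1-j) hu (hsign j (by omega))
            exact ⟨x, fun _ => ⟨fun _ => hx1, fun _ => hx2, hx3⟩⟩
      · exact ⟨0, fun h => absurd h hj⟩
    choose t ht using hkey
    have hroot : ∀ j, j ≤ n+1 → eval (t j) p = 0 := fun j hj => (ht j hj).2.2
    have htr : ∀ j, j ≤ n → t j < r j := fun j hj => (ht j (by omega)).2.1 hj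
    have hrt : ∀ j, j+1 ≤ n+1 → r j < t (j+1) := fun j hj => by
      have := (ht (j+1) (by omega)).1 (by omega)
      rwa [show j+1-1 = j by omega] at this
    have hadj : ∀ j, j+1 ≤ n+1 → t j < t (j+1) :=
      fun j hj => (htr j (by omega)).trans (hrt j hj)
    have htmono := mono_of_adjacent t (n+1) hadj
    -- product form for p
    have hprodp : p = ∏ i ∈ range (n+2), (X - C (t i)) := by
      have hqm : (∏ i ∈ range (n+2), (X - C (t i))).Monic :=
        monic_prod_of_monic _ _ (fun i _ => monic_X_sub_C _)
      have hqd : (∏ i ∈ range (n+2), (X - C (t i))).natDegree = n+2 := by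
        rw [natDegree_prod _ _ (fun i _ => X_sub_C_ne_zero _)]
        simp [natDegree_X_sub_C]
      by_contra hne
      have hdiff : p - ∏ i ∈ range (n+2), (X - C (t i)) ≠ 0 := sub_ne_zero.mpr hne
      have hdlt : (p - ∏ i ∈ range (n+2), (X - C (t i))).natDegree < n+2 := by
        rw [natDegree_lt_iff_degree_lt hdiff]
        calc (p - ∏ i ∈ range (n+2), (X - C (t i))).degree < p.degree :=
            degree_sub_lt
              (by rw [degree_eq_natDegree (ne_zero b a (n+2)), natDeg,
                    degree_eq_natDegree hqm.ne_zero, hqd])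
              (ne_zero b a (n+2))
              (by rw [(monic b a (n+2)).leadingCoeff, hqm.leadingCoeff])
          _ ≤ ((n+2:ℕ) : WithBot ℕ) := by
              rw [degree_eq_natDegree (ne_zero b a (n+2)), natDeg]
      have hinj : Function.Injective (fun i : Fin (n+2) => t i.val) := by
        intro i j hij
        by_contra hne'
        rcases Nat.lt_or_ge i.val j.val with h | h
        · exact absurd hij (ne_of_lt (htmono i.val j.val h (by omega)))
        · have hlt' : j.val < i.val := by
            rcases Nat.eq_or_lt_of_le h with h' | h'
            · exact absurd (Fin.ext h'.symm) hne'
            · exact h'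
          exact absurd hij.symm (ne_of_lt (htmono j.val i.val hlt' (by omega)))
      have := Polynomial.eq_zero_of_natDegree_lt_card_of_eval_eq_zero
        (p - ∏ i ∈ range (n+2), (X - C (t i))) hinj
        (fun i => by
          rw [eval_sub, hroot i.val (by omega), eval_prod_root t (n+2) i.val i.isLt]
          ring)
        (by rwa [Fintype.card_fin])
      exact hdiff this
    refine ⟨t, r, ?_, hprodp, hr, ?_⟩
    · intro i j hij hj
      exact htmono i j hij (by omega)
    · intro j hj
      exact ⟨htr j (by omega), hrt j (by omega)⟩
lemma deriv_root_ne (r : ℕ → ℝ) (N : ℕ) (hmono : ∀ i j, i < j → j < N → r i < r j)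
    (i : ℕ) (hi : i < N) :
    eval (r i) (derivative (∏ j ∈ range N, (X - C (r j)))) ≠ 0 := by
  rw [← Finset.mul_prod_erase _ _ (Finset.mem_range.mpr hi), derivative_mul]
  simp only [derivative_sub, derivative_X, derivative_C, sub_zero, one_mul, eval_add, eval_mul,
    eval_sub, eval_X, eval_C, sub_self, zero_mul, zero_add]
  rw [eval_prod]
  simp only [eval_sub, eval_X, eval_C]
  rw [add_zero, Finset.prod_ne_zero_iff]
  intro j hj
  obtain ⟨hji, hjN⟩ := Finset.mem_erase.mp hj
  have hne : r i ≠ r j := by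
    rcases Nat.lt_or_ge i j with h | h
    · exact ne_of_lt (hmono i j h (Finset.mem_range.mp hjN))
    · have hji' : j < i := by omega
      exact (ne_of_lt (hmono j i hji' hi)).symm
  exact sub_ne_zero.mpr hne

lemma O_lemma (ha : ∀ k ≥ 1, 0 < a k)
    (hodd : ∀ m ≥ 1, ∀ z₀ z₁ : ℝ,
      eval z₀ (tridiagRec b a (2*m)) = 0 → eval z₁ (tridiagRec b a (2*m)) = 0 →
      eval z₀ (tridiagRec b a (2*m-1)) * eval z₁ (derivative (tridiagRec b a (2*m))) =
        eval z₁ (tridiagRec b a (2*m-1)) * eval z₀ (derivative (tridiagRec b a (2*m))))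
    (k : ℕ) :
    derivative (tridiagRec b a (2*k+2)) = C (2*(k:ℝ)+2) * tridiagRec b a (2*k+1) := by
  have hodd' := hodd (k+1) (by omega)
  rw [show 2*(k+1) = 2*k+2 by ring] at hodd'
  rw [show 2*k+2-1 = 2*k+1 by omega] at hodd'
  obtain ⟨r, s, hm, hprod, -, -⟩ := interlacing b a ha (2*k+1)
  rw [show 2*k+1+1 = 2*k+2 by ring] at hprod hm
  have hroots : ∀ i, i < 2*k+2 → eval (r i) (tridiagRec b a (2*k+2)) = 0 := fun i hi => by
    rw [hprod]; exact eval_prod_root r (2*k+2) i hi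
  set D0 := eval (r 0) (derivative (tridiagRec b a (2*k+2))) with hD0def
  set N0 := eval (r 0) (tridiagRec b a (2*k+1)) with hN0def
  have hD0 : D0 ≠ 0 := by
    rw [hD0def, hprod]; exact deriv_root_ne r (2*k+2) hm 0 (by omega)
  have hN0 : N0 ≠ 0 := fun h =>
    no_common_root b a (2*k+1) (r 0) (hroots 0 (by omega)) h ha
  have hq0 : C D0 * tridiagRec b a (2*k+1)
      - C N0 * derivative (tridiagRec b a (2*k+2)) = 0 := by
    apply Polynomial.eq_zero_of_natDegree_lt_card_of_eval_eq_zero _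
      (f := fun i : Fin (2*k+2) => r i.val)
      (fun i j hij => by
        by_contra hne'
        rcases Nat.lt_or_ge i.val j.val with h | h
        · exact absurd hij (ne_of_lt (hm i.val j.val h j.isLt))
        · have hlt' : j.val < i.val := by
            rcases Nat.eq_or_lt_of_le h with h' | h'
            · exact absurd (Fin.ext h'.symm) hne'
            · exact h'
          exact absurd hij.symm (ne_of_lt (hm j.val i.val hlt' i.isLt)))
    · intro i
      have hcross := hodd' (r i.val) (r 0) (hroots i.val i.isLt) (hroots 0 (by omega))
      simp only [eval_sub, eval_mul, eval_C]
      rw [hD0def, hN0def]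
      linarith [hcross]
    · rw [Fintype.card_fin]
      calc (C D0 * tridiagRec b a (2*k+1)
            - C N0 * derivative (tridiagRec b a (2*k+2))).natDegree
          ≤ max (C D0 * tridiagRec b a (2*k+1)).natDegree
              (C N0 * derivative (tridiagRec b a (2*k+2))).natDegree := natDegree_sub_le _ _
        _ ≤ 2*k+1 := by
            apply max_le
            · exact (natDegree_C_mul_le _ _).trans (by rw [natDeg])
            · refine (natDegree_C_mul_le _ _).trans ?_
              have h1 : (derivative (tridiagRec b a (2*k+2))).natDegree < 2*k+2 := by
                have := natDegree_derivative_lt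
                  (p := tridiagRec b a (2*k+2)) (by rw [natDeg]; omega)
                rwa [natDeg] at this
              omega
        _ < 2*k+2 := by omega
  have hco : D0 = N0 * (2*(k:ℝ)+2) := by
    have h1 := congrArg (fun p => coeff p (2*k+1)) hq0
    simp only [coeff_sub, coeff_C_mul, coeff_zero] at h1
    rw [coeff_top, coeff_derivative, coeff_top] at h1
    push_cast at h1
    linarith
  have hkey : C N0 * (C (2*(k:ℝ)+2) * tridiagRec b a (2*k+1)
      - derivative (tridiagRec b a (2*k+2))) = 0 := by
    rw [mul_sub, ← mul_assoc, ← C_mul, ← hco]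
    exact hq0
  rcases mul_eq_zero.mp hkey with h | h
  · exact absurd (C_eq_zero.mp h) hN0
  · have := sub_eq_zero.mp h
    exact this.symm
lemma E_lemma (ha : ∀ k ≥ 1, 0 < a k)
    (heven : ∀ m : ℕ, ∀ z₀ z₁ : ℝ,
      eval z₀ (tridiagRec b a (2*m+1)) = 0 → eval z₁ (tridiagRec b a (2*m+1)) = 0 →
      z₀ ≠ 0 → z₁ ≠ 0 →
      eval z₀ (tridiagRec b a (2*m)) * eval z₁ (derivative (tridiagRec b a (2*m+1))) =
        eval z₁ (tridiagRec b a (2*m)) * eval z₀ (derivative (tridiagRec b a (2*m+1))))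
    (k : ℕ) (hk : 1 ≤ k)
    (hroot0 : eval 0 (tridiagRec b a (2*k+1)) = 0) :
    ∃ l u : ℝ, l + u = 2*(k:ℝ)+1 ∧
      X * derivative (tridiagRec b a (2*k+1)) =
        C l * (X * tridiagRec b a (2*k)) + C u * tridiagRec b a (2*k+1) := by
  obtain ⟨r, s, hm, hprod, -, -⟩ := interlacing b a ha (2*k)
  have hroots : ∀ i, i < 2*k+1 → eval (r i) (tridiagRec b a (2*k+1)) = 0 := fun i hi => by
    rw [hprod]; exact eval_prod_root r (2*k+1) i hi
  set i0 : ℕ := if r 0 = 0 then 1 else 0 with hi0def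
  have hi0 : i0 < 2*k+1 := by
    rw [hi0def]; split <;> omega
  have hz1 : r i0 ≠ 0 := by
    rw [hi0def]; split
    · rename_i h0
      have := hm 0 1 (by omega) (by omega)
      rw [h0] at this; linarith
    · assumption
  set D1 := eval (r i0) (derivative (tridiagRec b a (2*k+1))) with hD1def
  set N1 := eval (r i0) (tridiagRec b a (2*k)) with hN1def
  have hD1 : D1 ≠ 0 := by
    rw [hD1def, hprod]; exact deriv_root_ne r (2*k+1) hm i0 hi0
  have hN1 : N1 ≠ 0 := fun h =>
    no_common_root b a (2*k) (r i0) (hroots i0 hi0) h ha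
  have hG0 : C D1 * (X * tridiagRec b a (2*k))
      - C N1 * (X * derivative (tridiagRec b a (2*k+1)))
      - C (D1 - N1*(2*(k:ℝ)+1)) * tridiagRec b a (2*k+1) = 0 := by
    apply Polynomial.eq_zero_of_natDegree_lt_card_of_eval_eq_zero _
      (f := fun i : Fin (2*k+1) => r i.val)
      (fun i j hij => by
        by_contra hne'
        rcases Nat.lt_or_ge i.val j.val with h | h
        · exact absurd hij (ne_of_lt (hm i.val j.val h j.isLt))
        · have hlt' : j.val < i.val := by
            rcases Nat.eq_or_lt_of_le h with h' | h'
            · exact absurd (Fin.ext h'.symm) hne'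
            · exact h'
          exact absurd hij.symm (ne_of_lt (hm j.val i.val hlt' i.isLt)))
    · intro i
      by_cases hri : r i.val = 0
      · simp only [eval_sub, eval_mul, eval_C, eval_X, hri, hroot0]
        ring
      · have hcross := heven k (r i.val) (r i0) (hroots i.val i.isLt) (hroots i0 hi0) hri hz1
        simp only [eval_sub, eval_mul, eval_C, eval_X, hroots i.val i.isLt]
        rw [hD1def, hN1def]
        linear_combination (r i.val) * hcross
    · rw [Fintype.card_fin]
      have hle : (C D1 * (X * tridiagRec b a (2*k))
          - C N1 * (X * derivative (tridiagRec b a (2*k+1)))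
          - C (D1 - N1*(2*(k:ℝ)+1)) * tridiagRec b a (2*k+1)).natDegree ≤ 2*k := by
        rw [natDegree_le_iff_coeff_eq_zero]
        intro N hN
        obtain ⟨M, rfl⟩ : ∃ M, N = M + 1 := ⟨N-1, by omega⟩
        have hM : 2*k ≤ M := by omega
        simp only [coeff_sub, coeff_C_mul, coeff_X_mul, coeff_derivative]
        rcases Nat.eq_or_lt_of_le hM with rfl | hM'
        · rw [coeff_top, coeff_top]
          push_cast
          ring
        · rw [coeff_gt b a hM', coeff_gt b a (by omega : 2*k+1 < M+1)]
          ring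
      omega
  refine ⟨D1/N1, 2*(k:ℝ)+1 - D1/N1, by ring, ?_⟩
  apply mul_left_cancel₀ (show (C N1 : Polynomial ℝ) ≠ 0 from fun h => hN1 (C_eq_zero.mp h))
  have h1 : N1 * (D1/N1) = D1 := by field_simp
  have h2 : N1 * (2*(k:ℝ)+1 - D1/N1) = N1*(2*(k:ℝ)+1) - D1 := by
    field_simp
  calc C N1 * (X * derivative (tridiagRec b a (2*k+1)))
      = C D1 * (X * tridiagRec b a (2*k))
        - C (D1 - N1*(2*(k:ℝ)+1)) * tridiagRec b a (2*k+1) := by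
        linear_combination - hG0
    _ = C (N1 * (D1/N1)) * (X * tridiagRec b a (2*k))
        + (C (N1*(2*(k:ℝ)+1)) - C (N1 * (D1/N1))) * tridiagRec b a (2*k+1) := by
        rw [h1]
        rw [show C (D1 - N1*(2*(k:ℝ)+1)) = C D1 - C (N1*(2*(k:ℝ)+1)) from by rw [map_sub]]
        ring
    _ = C N1 * (C (D1/N1) * (X * tridiagRec b a (2*k))
        + C (2*(k:ℝ)+1 - D1/N1) * tridiagRec b a (2*k+1)) := by
        rw [show C (N1*(2*(k:ℝ)+1)) = C N1 * C (2*(k:ℝ)+1) from by rw [map_mul],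
          show C (N1 * (D1/N1)) = C N1 * C (D1/N1) from by rw [map_mul],
          show C (2*(k:ℝ)+1 - D1/N1) = C (2*(k:ℝ)+1) - C (D1/N1) from by rw [map_sub]]
        ring
lemma eval_zero_pair (m : ℕ) (hb : ∀ k, 1 ≤ k → k < 2*m → b k = 0) :
    (1 ≤ m → eval 0 (tridiagRec b a (2*m-1)) = 0) ∧
    eval 0 (tridiagRec b a (2*m)) = (-1)^m * ∏ i ∈ range m, a (2*i+1) := by
  induction m with
  | zero => exact ⟨by omega, by simp [tridiagRec]⟩
  | succ m IH =>
    obtain ⟨IH1, IH2⟩ := IH (fun k h1 h2 => hb k h1 (by omega))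
    have hodd0 : eval 0 (tridiagRec b a (2*m+1)) = 0 := by
      rcases Nat.eq_zero_or_pos m with rfl | hm
      · show eval 0 (X - C (b 1)) = 0
        simp [hb 1 (by omega) (by omega)]
      · have hrec := rec_eq b a (2*m-1)
        rw [show 2*m-1+2 = 2*m+1 by omega, show 2*m-1+1 = 2*m by omega] at hrec
        rw [hrec]
        simp only [eval_sub, eval_mul, eval_C, eval_X]
        rw [IH1 hm, hb (2*m+1) (by omega) (by omega)]
        ring
    constructor
    · intro _
      rw [show 2*(m+1)-1 = 2*m+1 by omega]
      exact hodd0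
    · have hrec := rec_eq b a (2*m)
      rw [show 2*m+2 = 2*(m+1) by ring, show 2*m+1 = 2*m+1 from rfl] at hrec
      rw [hrec]
      simp only [eval_sub, eval_mul, eval_C, eval_X]
      rw [hodd0, IH2, Finset.prod_range_succ]
      ring

lemma bzero (ha : ∀ k ≥ 1, 0 < a k)
    (hodd : ∀ m ≥ 1, ∀ z₀ z₁ : ℝ,
      eval z₀ (tridiagRec b a (2*m)) = 0 → eval z₁ (tridiagRec b a (2*m)) = 0 →
      eval z₀ (tridiagRec b a (2*m-1)) * eval z₁ (derivative (tridiagRec b a (2*m))) =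
        eval z₁ (tridiagRec b a (2*m-1)) * eval z₀ (derivative (tridiagRec b a (2*m))))
    (heven_root : ∀ m : ℕ, eval 0 (tridiagRec b a (2*m+1)) = 0) :
    ∀ n, 1 ≤ n → b n = 0 := by
  have hO := O_lemma b a ha hodd
  have hS : ∀ k : ℕ, (2*(k:ℝ)+1) * (∑ i ∈ range (2*k+2), b (i+1))
      = (2*(k:ℝ)+2) * (∑ i ∈ range (2*k+1), b (i+1)) := by
    intro k
    have h := congrArg (fun p => coeff p (2*k)) (hO k)
    simp only [coeff_C_mul, coeff_derivative] at h
    have e1 := coeff_sub_one b a (2*k+1)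
    rw [show 2*k+1+1 = 2*k+2 by omega] at e1
    have e2 := coeff_sub_one b a (2*k)
    rw [e1, e2] at h
    push_cast at h
    linarith
  intro n
  induction n using Nat.strong_induction_on with
  | _ n IH =>
    intro hn
    rcases Nat.even_or_odd n with ⟨m, hm⟩ | ⟨m, hm⟩
    · have hm1 : 1 ≤ m := by omega
      have hSk := hS (m-1)
      rw [show 2*(m-1)+2 = n by omega, show 2*(m-1)+1 = n-1 by omega] at hSk
      have hsum1 : ∑ i ∈ range (n-1), b (i+1) = 0 :=
        Finset.sum_eq_zero (fun i hi => IH (i+1)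
          (by have := Finset.mem_range.mp hi; omega) (by omega))
      have hsum2 : ∑ i ∈ range n, b (i+1) = b n := by
        rw [show n = (n-1)+1 by omega, Finset.sum_range_succ, hsum1, zero_add,
          show n-1+1 = n by omega]
      rw [hsum1, hsum2, mul_zero] at hSk
      have hpos : (0:ℝ) < 2*((m-1:ℕ):ℝ)+1 := by positivity
      have := mul_eq_zero.mp hSk
      rcases this with h | h
      · linarith
      · exact h
    · rcases Nat.eq_zero_or_pos m with rfl | hm1
      · have h := heven_root 0
        rw [show 2*0+1 = 1 by omega] at h
        have he : eval 0 (tridiagRec b a 1) = -(b 1) := by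
          show eval 0 (X - C (b 1)) = _; simp
        rw [he] at h
        have : b 1 = 0 := by linarith
        rw [show n = 1 by omega]; exact this
      · have hpair := eval_zero_pair b a m (fun k h1 h2 => IH k (by omega) h1)
        have h := heven_root m
        have hrec := rec_eq b a (2*m-1)
        rw [show 2*m-1+2 = 2*m+1 by omega, show 2*m-1+1 = 2*m by omega] at hrec
        rw [hrec] at h
        simp only [eval_sub, eval_mul, eval_C, eval_X] at h
        rw [hpair.1 hm1, hpair.2, mul_zero, sub_zero] at h
        have hprodpos : 0 < ∏ i ∈ range m, a (2*i+1) :=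
          Finset.prod_pos (fun i _ => ha _ (by omega))
        have hne : ((-1:ℝ))^m * ∏ i ∈ range m, a (2*i+1) ≠ 0 :=
          mul_ne_zero (pow_ne_zero _ (by norm_num)) (ne_of_gt hprodpos)
        rcases mul_eq_zero.mp h with h' | h'
        · rw [show n = 2*m+1 by omega]; linarith
        · exact absurd h' hne
lemma T1_eq (hb : ∀ n, 1 ≤ n → b n = 0) : tridiagRec b a 1 = X := by
  show X - C (b 1) = X
  rw [hb 1 (by omega)]; simp

lemma rec0 (hb : ∀ n, 1 ≤ n → b n = 0) (k : ℕ) :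
    tridiagRec b a (k+2) = X * tridiagRec b a (k+1) - C (a (k+1)) * tridiagRec b a k := by
  rw [rec_eq, hb (k+2) (by omega)]
  simp

lemma drec0 (hb : ∀ n, 1 ≤ n → b n = 0) (k : ℕ) :
    derivative (tridiagRec b a (k+2)) = tridiagRec b a (k+1)
      + X * derivative (tridiagRec b a (k+1)) - C (a (k+1)) * derivative (tridiagRec b a k) := by
  rw [rec0 b a hb k]
  simp [derivative_mul]

lemma Xstar (ha : ∀ k ≥ 1, 0 < a k)
    (hodd : ∀ m ≥ 1, ∀ z₀ z₁ : ℝ,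
      eval z₀ (tridiagRec b a (2*m)) = 0 → eval z₁ (tridiagRec b a (2*m)) = 0 →
      eval z₀ (tridiagRec b a (2*m-1)) * eval z₁ (derivative (tridiagRec b a (2*m))) =
        eval z₁ (tridiagRec b a (2*m-1)) * eval z₀ (derivative (tridiagRec b a (2*m))))
    (hb : ∀ n, 1 ≤ n → b n = 0) (j : ℕ) :
    X * derivative (tridiagRec b a (2*j+3)) =
      C (2*(j:ℝ)+3) * tridiagRec b a (2*j+3)
        + C ((2*(j:ℝ)+2) * a (2*j+3)) * tridiagRec b a (2*j+1) := by
  have hO := O_lemma b a ha hodd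
  have hd4 := drec0 b a hb (2*j+2)
  rw [show 2*j+2+2 = 2*j+4 by ring, show 2*j+2+1 = 2*j+3 by ring] at hd4
  have h4 := hO (j+1)
  rw [show 2*(j+1)+2 = 2*j+4 by ring, show 2*(j+1)+1 = 2*j+3 by ring] at h4
  have h2 := hO j
  push_cast at h4
  simp only [map_add, map_mul, map_ofNat, map_natCast, map_one] at h4 h2 ⊢
  linear_combination h4 - hd4 + C (a (2*j+3)) * h2

lemma F1 (ha : ∀ k ≥ 1, 0 < a k)
    (hodd : ∀ m ≥ 1, ∀ z₀ z₁ : ℝ,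
      eval z₀ (tridiagRec b a (2*m)) = 0 → eval z₁ (tridiagRec b a (2*m)) = 0 →
      eval z₀ (tridiagRec b a (2*m-1)) * eval z₁ (derivative (tridiagRec b a (2*m))) =
        eval z₁ (tridiagRec b a (2*m-1)) * eval z₀ (derivative (tridiagRec b a (2*m))))
    (hb : ∀ n, 1 ≤ n → b n = 0) :
    a 3 = a 1 + a 2 := by
  have hX0 := Xstar b a ha hodd hb 0
  have hT1 : tridiagRec b a 1 = X := T1_eq b a hb
  have hT2 : tridiagRec b a 2 = X*X - C (a 1) := by
    have := rec0 b a hb 0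
    rw [show 0+2 = 2 by omega, show 0+1 = 1 by omega, hT1] at this
    rw [this, show tridiagRec b a 0 = 1 from rfl]
    ring
  have hT3 : tridiagRec b a 3 = X*(X*X - C (a 1)) - C (a 2) * X := by
    have := rec0 b a hb 1
    rw [show 1+2 = 3 by omega, show 1+1 = 2 by omega, hT2, hT1] at this
    exact this
  rw [show 2*0+3 = 3 by omega, show 2*0+1 = 1 by omega, hT3, hT1] at hX0
  have h1 := congrArg (eval 1) hX0
  simp only [derivative_sub, derivative_mul, derivative_X, derivative_C, eval_mul, eval_add,
    eval_sub, eval_X, eval_C, eval_one, mul_one, one_mul, mul_zero, zero_mul, sub_zero,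
    zero_add, Nat.cast_zero] at h1
  norm_num at h1
  linarith

lemma key_relations (ha : ∀ k ≥ 1, 0 < a k)
    (hodd : ∀ m ≥ 1, ∀ z₀ z₁ : ℝ,
      eval z₀ (tridiagRec b a (2*m)) = 0 → eval z₁ (tridiagRec b a (2*m)) = 0 →
      eval z₀ (tridiagRec b a (2*m-1)) * eval z₁ (derivative (tridiagRec b a (2*m))) =
        eval z₁ (tridiagRec b a (2*m-1)) * eval z₀ (derivative (tridiagRec b a (2*m))))
    (heven : ∀ m : ℕ, ∀ z₀ z₁ : ℝ,
      eval z₀ (tridiagRec b a (2*m+1)) = 0 → eval z₁ (tridiagRec b a (2*m+1)) = 0 →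
      z₀ ≠ 0 → z₁ ≠ 0 →
      eval z₀ (tridiagRec b a (2*m)) * eval z₁ (derivative (tridiagRec b a (2*m+1))) =
        eval z₁ (tridiagRec b a (2*m)) * eval z₀ (derivative (tridiagRec b a (2*m+1))))
    (heven_root : ∀ m : ℕ, eval 0 (tridiagRec b a (2*m+1)) = 0)
    (hb : ∀ n, 1 ≤ n → b n = 0) (j : ℕ) :
    ∃ l : ℝ, l * a (2*j+2) = (2*(j:ℝ)+2) * a (2*j+3) ∧
      l * a (2*j+4) = (2*(j:ℝ)+4) * a (2*j+3) ∧
      (2*(j:ℝ)+4) * a (2*j+5) = (2*(j:ℝ)+4) * a (2*j+3) + 2 * a (2*j+4) := by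
  have hroot := heven_root (j+1)
  rw [show 2*(j+1)+1 = 2*j+3 by ring] at hroot
  obtain ⟨l, u, hlu, hE⟩ := E_lemma b a ha heven (j+1) (by omega) hroot
  rw [show 2*(j+1)+1 = 2*j+3 by ring, show 2*(j+1) = 2*j+2 by ring] at hE
  have hlu2 : l + u = 2*(j:ℝ)+3 := by push_cast at hlu; linarith
  have hluC : (C l + C u : Polynomial ℝ) = 2*((j:ℕ) : Polynomial ℝ)+3 := by
    have := congrArg C hlu2
    simpa only [map_add, map_mul, map_ofNat, map_natCast, map_one] using this
  refine ⟨l, ?_, ?_, ?_⟩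
  case _ =>
    -- relation I : l * a (2j+2) = (2j+2) * a (2j+3)
    have hXj := Xstar b a ha hodd hb j
    have hr := rec0 b a hb (2*j+1)
    rw [show 2*j+1+2 = 2*j+3 by ring, show 2*j+1+1 = 2*j+2 by ring] at hr
    have key : C (l * a (2*j+2) - (2*(j:ℝ)+2) * a (2*j+3)) * tridiagRec b a (2*j+1) = 0 := by
      simp only [map_sub, map_add, map_mul, map_ofNat, map_natCast, map_one] at hXj ⊢
      linear_combination hXj - hE + C l * hr - (tridiagRec b a (2*j+3)) * hluC
    rcases mul_eq_zero.mp key with h | h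
    · have := C_eq_zero.mp h
      linarith [this]
    · exact absurd h (ne_zero b a (2*j+1))
  all_goals {
    -- the big identity at level j+2
    have hX5 := Xstar b a ha hodd hb (j+1)
    rw [show 2*(j+1)+3 = 2*j+5 by ring, show 2*(j+1)+1 = 2*j+3 by ring] at hX5
    push_cast at hX5
    have hO4 := O_lemma b a ha hodd (j+1)
    rw [show 2*(j+1)+2 = 2*j+4 by ring, show 2*(j+1)+1 = 2*j+3 by ring] at hO4
    push_cast at hO4
    have hd5 := drec0 b a hb (2*j+3)
    rw [show 2*j+3+2 = 2*j+5 by ring, show 2*j+3+1 = 2*j+4 by ring] at hd5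
    have hr5 := rec0 b a hb (2*j+3)
    rw [show 2*j+3+2 = 2*j+5 by ring, show 2*j+3+1 = 2*j+4 by ring] at hr5
    have hr4 := rec0 b a hb (2*j+2)
    rw [show 2*j+2+2 = 2*j+4 by ring, show 2*j+2+1 = 2*j+3 by ring] at hr4
    have hr3 := rec0 b a hb (2*j+1)
    rw [show 2*j+1+2 = 2*j+3 by ring, show 2*j+1+1 = 2*j+2 by ring] at hr3
    have key : C ((2*(j:ℝ)+4) * a (2*j+5) - 2 * a (2*j+4) - (2*(j:ℝ)+4) * a (2*j+3))
          * tridiagRec b a (2*j+3)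
        = C (a (2*j+2) * ((2*(j:ℝ)+4) * a (2*j+3) - l * a (2*j+4)))
          * tridiagRec b a (2*j+1) := by
      simp only [map_sub, map_add, map_mul, map_ofNat, map_natCast, map_one] at hX5 hO4 ⊢
      linear_combination (-1 : Polynomial ℝ) * hX5 + X * hd5 + X*X*hO4
        - C (a (2*j+4)) * hE
        - (2*((j:ℕ) : Polynomial ℝ)+5) * hr5
        - (2*((j:ℕ) : Polynomial ℝ)+4) * X * hr4
        - ((2*((j:ℕ) : Polynomial ℝ)+4) * C (a (2*j+3)) - C (a (2*j+4)) * C l) * hr3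
        - C (a (2*j+4)) * (tridiagRec b a (2*j+3)) * hluC
    have hA : (2*(j:ℝ)+4) * a (2*j+5) - 2 * a (2*j+4) - (2*(j:ℝ)+4) * a (2*j+3) = 0 := by
      have h1 := congrArg (fun p => coeff p (2*j+3)) key
      simp only [coeff_C_mul] at h1
      rw [coeff_top, coeff_gt b a (by omega : 2*j+1 < 2*j+3)] at h1
      simpa using h1
    have hB : a (2*j+2) * ((2*(j:ℝ)+4) * a (2*j+3) - l * a (2*j+4)) = 0 := by
      rw [show C ((2*(j:ℝ)+4) * a (2*j+5) - 2 * a (2*j+4) - (2*(j:ℝ)+4) * a (2*j+3))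
          = (0 : Polynomial ℝ) from by rw [hA]; exact map_zero C, zero_mul] at key
      rcases mul_eq_zero.mp key.symm with h | h
      · exact C_eq_zero.mp h
      · exact absurd h (ne_zero b a (2*j+1))
    have ha2 : a (2*j+2) ≠ 0 := ne_of_gt (ha _ (by omega))
    rcases mul_eq_zero.mp hB with h | h
    · exact absurd h ha2
    · linarith [h]
  }
theorem main0 (ha : ∀ k ≥ 1, 0 < a k)
    (hodd : ∀ m ≥ 1, ∀ z₀ z₁ : ℝ,
      eval z₀ (tridiagRec b a (2*m)) = 0 → eval z₁ (tridiagRec b a (2*m)) = 0 →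
      eval z₀ (tridiagRec b a (2*m-1)) * eval z₁ (derivative (tridiagRec b a (2*m))) =
        eval z₁ (tridiagRec b a (2*m-1)) * eval z₀ (derivative (tridiagRec b a (2*m))))
    (heven_root : ∀ m : ℕ, eval 0 (tridiagRec b a (2*m+1)) = 0)
    (heven : ∀ m : ℕ, ∀ z₀ z₁ : ℝ,
      eval z₀ (tridiagRec b a (2*m+1)) = 0 → eval z₁ (tridiagRec b a (2*m+1)) = 0 →
      z₀ ≠ 0 → z₁ ≠ 0 →
      eval z₀ (tridiagRec b a (2*m)) * eval z₁ (derivative (tridiagRec b a (2*m+1))) =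
        eval z₁ (tridiagRec b a (2*m)) * eval z₀ (derivative (tridiagRec b a (2*m+1)))) :
    (∀ n, 1 ≤ n → b n = 0) ∧ (∀ j : ℕ, a (2*j+2) = ((j:ℝ)+1) * a 2)
      ∧ (∀ j : ℕ, a (2*j+3) = a 1 + ((j:ℝ)+1) * a 2) := by
  have hb := bzero b a ha hodd heven_root
  have hae : ∀ j : ℕ, a (2*j+2) = ((j:ℝ)+1) * a 2 := by
    intro j
    induction j with
    | zero => norm_num
    | succ j IH =>
      obtain ⟨l, h1, h2, -⟩ := key_relations b a ha hodd heven heven_root hb j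
      have ha3 : 0 < a (2*j+3) := ha _ (by omega)
      have hcomb : a (2*j+3) * ((2*(j:ℝ)+4) * a (2*j+2)) =
          a (2*j+3) * ((2*(j:ℝ)+2) * a (2*j+4)) := by
        linear_combination a (2*j+4) * h1 - a (2*j+2) * h2
      have heq := mul_left_cancel₀ (ne_of_gt ha3) hcomb
      rw [IH] at heq
      have h5 : (2*(j:ℝ)+2) * a (2*j+4) = (2*(j:ℝ)+2) * (((j:ℝ)+2) * a 2) := by
        linear_combination heq.symm
      have h6 := mul_left_cancel₀ (show (2*(j:ℝ)+2) ≠ 0 from by positivity) h5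
      rw [show 2*(j+1)+2 = 2*j+4 by ring]
      push_cast
      linarith [h6]
  have hao : ∀ j : ℕ, a (2*j+3) = a 1 + ((j:ℝ)+1) * a 2 := by
    intro j
    induction j with
    | zero =>
      have := F1 b a ha hodd hb
      norm_num
      linarith [this]
    | succ j IH =>
      obtain ⟨l, -, -, h3⟩ := key_relations b a ha hodd heven heven_root hb j
      have he4 := hae (j+1)
      rw [show 2*(j+1)+2 = 2*j+4 by ring] at he4
      push_cast at he4
      rw [IH, he4] at h3
      have h5 : (2*(j:ℝ)+4) * a (2*j+5) = (2*(j:ℝ)+4) * (a 1 + ((j:ℝ)+2) * a 2) := by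
        linear_combination h3
      have h6 := mul_left_cancel₀ (show (2*(j:ℝ)+4) ≠ 0 from by positivity) h5
      rw [show 2*(j+1)+3 = 2*j+5 by ring]
      push_cast
      linarith [h6]
  exact ⟨hb, hae, hao⟩

lemma tridiag_shift (x₀ : ℝ) : ∀ n,
    (tridiagRec b a n).comp (X + C x₀) = tridiagRec (fun k => b k - x₀) a n := by
  intro n
  induction n using Nat.strong_induction_on with
  | _ n ih =>
    match n with
    | 0 => simp [tridiagRec]
    | 1 =>
      show (X - C (b 1)).comp _ = X - C (b 1 - x₀)
      rw [sub_comp, X_comp, C_comp, map_sub]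
      ring
    | (k+2) =>
      show ((X - C (b (k+2))) * tridiagRec b a (k+1)
          - C (a (k+1)) * tridiagRec b a k).comp _
        = (X - C (b (k+2) - x₀)) * tridiagRec (fun k => b k - x₀) a (k+1)
          - C (a (k+1)) * tridiagRec (fun k => b k - x₀) a k
      rw [sub_comp, mul_comp, mul_comp, sub_comp, X_comp, C_comp, C_comp,
        ih (k+1) (by omega), ih k (by omega), map_sub]
      ring

end GHC

/-- **Characterization of the generalized Hermite polynomials (Theorem 2.1).**
If the reversed measures `μ_n^R` (with Stieltjes transform `P n / P (n+1)`, hence masses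
`P n z₀ / (P (n+1))' z₀` at the roots `z₀` of `P (n+1)`) have equal masses at all support
points for odd `n = 2m - 1`, and, for even `n = 2m`, have equal masses at all support points
different from a fixed point `x₀` (which is always a support point and carries positive mass),
then the recurrence coefficients are those of the monic generalized Hermite polynomials,
orthogonal with respect to `|x|^γ exp(-x²) dx`, up to the linear transformation
`x ↦ c (x - x₀)`. -/
theorem generalized_hermite_characterization
    (b a : ℕ → ℝ) (ha : ∀ n ≥ 1, 0 < a n) (x₀ : ℝ)
    (P : ℕ → Polynomial ℝ) (hP : P = tridiagRec b a)
    (hodd : ∀ m ≥ 1, ∀ z₀ z₁ : ℝ,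
      (P (2 * m)).eval z₀ = 0 → (P (2 * m)).eval z₁ = 0 →
      (P (2 * m - 1)).eval z₀ * (Polynomial.derivative (P (2 * m))).eval z₁ =
        (P (2 * m - 1)).eval z₁ * (Polynomial.derivative (P (2 * m))).eval z₀)
    (heven_root : ∀ m : ℕ, (P (2 * m + 1)).eval x₀ = 0)
    (heven : ∀ m : ℕ, ∀ z₀ z₁ : ℝ,
      (P (2 * m + 1)).eval z₀ = 0 → (P (2 * m + 1)).eval z₁ = 0 →
      z₀ ≠ x₀ → z₁ ≠ x₀ →
      (P (2 * m)).eval z₀ * (Polynomial.derivative (P (2 * m + 1))).eval z₁ =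
        (P (2 * m)).eval z₁ * (Polynomial.derivative (P (2 * m + 1))).eval z₀)
    (heven_pos : ∀ m : ℕ,
      0 < (P (2 * m)).eval x₀ * (Polynomial.derivative (P (2 * m + 1))).eval x₀) :
    ∃ γ : ℝ, -1 < γ ∧ ∃ c : ℝ, 0 < c ∧
      (∀ n ≥ 1, b n = x₀) ∧
      (∀ n ≥ 1, Even n → a n = n / (2 * c ^ 2)) ∧
      (∀ n ≥ 1, Odd n → a n = (n + γ) / (2 * c ^ 2)) := by
  subst hP
  have hcomp : ∀ n, (tridiagRec b a n).comp (X + C x₀)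
      = tridiagRec (fun k => b k - x₀) a n := GHC.tridiag_shift b a x₀
  have heval : ∀ n z, eval z (tridiagRec (fun k => b k - x₀) a n)
      = eval (z + x₀) (tridiagRec b a n) := by
    intro n z
    rw [← hcomp n, eval_comp]
    simp
  have hderiv : ∀ n z, eval z (derivative (tridiagRec (fun k => b k - x₀) a n))
      = eval (z + x₀) (derivative (tridiagRec b a n)) := by
    intro n z
    rw [← hcomp n, derivative_comp]
    simp [eval_comp]
  have hodd' : ∀ m ≥ 1, ∀ z₀ z₁ : ℝ,
      eval z₀ (tridiagRec (fun k => b k - x₀) a (2*m)) = 0 →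
      eval z₁ (tridiagRec (fun k => b k - x₀) a (2*m)) = 0 →
      eval z₀ (tridiagRec (fun k => b k - x₀) a (2*m-1))
          * eval z₁ (derivative (tridiagRec (fun k => b k - x₀) a (2*m))) =
        eval z₁ (tridiagRec (fun k => b k - x₀) a (2*m-1))
          * eval z₀ (derivative (tridiagRec (fun k => b k - x₀) a (2*m))) := by
    intro m hm z₀ z₁ h0 h1
    rw [heval] at h0 h1
    rw [heval, heval, hderiv, hderiv]
    exact hodd m hm _ _ h0 h1
  have heven_root' : ∀ m : ℕ, eval 0 (tridiagRec (fun k => b k - x₀) a (2*m+1)) = 0 := by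
    intro m
    rw [heval, zero_add]
    exact heven_root m
  have heven' : ∀ m : ℕ, ∀ z₀ z₁ : ℝ,
      eval z₀ (tridiagRec (fun k => b k - x₀) a (2*m+1)) = 0 →
      eval z₁ (tridiagRec (fun k => b k - x₀) a (2*m+1)) = 0 →
      z₀ ≠ 0 → z₁ ≠ 0 →
      eval z₀ (tridiagRec (fun k => b k - x₀) a (2*m))
          * eval z₁ (derivative (tridiagRec (fun k => b k - x₀) a (2*m+1))) =
        eval z₁ (tridiagRec (fun k => b k - x₀) a (2*m))
          * eval z₀ (derivative (tridiagRec (fun k => b k - x₀) a (2*m+1))) := by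
    intro m z₀ z₁ h0 h1 hz0 hz1
    rw [heval] at h0 h1
    rw [heval, heval, hderiv, hderiv]
    exact heven m _ _ h0 h1 (fun h => hz0 (by linarith)) (fun h => hz1 (by linarith))
  obtain ⟨hb0, hae, hao⟩ := GHC.main0 (fun k => b k - x₀) a ha hodd' heven_root' heven'
  have ha2 : 0 < a 2 := ha 2 (by omega)
  have ha1 : 0 < a 1 := ha 1 (by omega)
  have ha2' : a 2 ≠ 0 := ne_of_gt ha2
  have hc2 : ((Real.sqrt (a 2))⁻¹)^2 = (a 2)⁻¹ := by
    rw [inv_pow, Real.sq_sqrt ha2.le]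
  refine ⟨2 * a 1 / a 2 - 1, by
      have h01 : 0 < 2 * a 1 / a 2 := by positivity
      linarith, (Real.sqrt (a 2))⁻¹, by positivity, ?_, ?_, ?_⟩
  · intro n hn
    have := hb0 n hn
    have h := sub_eq_zero.mp this
    exact h
  · intro n hn hev
    obtain ⟨m, hm⟩ := hev
    have hm1 : 1 ≤ m := by omega
    have h := hae (m-1)
    rw [show 2*(m-1)+2 = n by omega] at h
    have hcast : ((m-1:ℕ):ℝ) = (m:ℝ) - 1 := by
      push_cast [hm1]; ring
    rw [hcast] at h
    have hncast : ((n:ℝ)) = 2*(m:ℝ) := by rw [hm]; push_cast; ring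
    rw [h, hc2, hncast]
    field_simp
    ring
  · intro n hn hodd_n
    obtain ⟨m, hm⟩ := hodd_n
    rcases Nat.eq_zero_or_pos m with rfl | hm1
    · rw [show n = 1 by omega]
      rw [hc2]
      push_cast
      field_simp
      ring
    · have h := hao (m-1)
      rw [show 2*(m-1)+3 = n by omega] at h
      have hcast : ((m-1:ℕ):ℝ) = (m:ℝ) - 1 := by
        push_cast [hm1]; ring
      rw [hcast] at h
      have hncast : ((n:ℝ)) = 2*(m:ℝ)+1 := by rw [hm]; push_cast; ring
      rw [h, hc2, hncast]
      field_simp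
      ring
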